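/- Let T be a locally finite tree and f a self-embedding of T preserving forward a ray R = r₁r₂⋯ with f(r₁) = r_m, m > 1. If the rooted branches T^f_r for r ∈ R fall into infinitely many isomorphism classes (R is non-regular), then there exist infinitely many indices k and vertices s_k <_f t_k on R with f(s_k) = t_k and T^f_{s_k} not isomorphic to T^f_{t_k}, and consequently T ∖ f(T) has infinitely many components. -/

import Mathlib

/-- A ray in a graph. -/
def IsRay {V : Type*} (G : SimpleGraph V) (r : ℕ → V) : Prop :=
  Function.Injective r ∧ ∀ n, G.Adj (r n) (r (n + 1))

/-- The branch of the tree at the vertex `r i` of the ray `r`: the maximal subtree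
containing `r i` and edge-disjoint from the ray. -/
def BranchAt {V : Type*} (G : SimpleGraph V) (r : ℕ → V) (i : ℕ) : Set V :=
  {v | ∀ j, G.dist v (r j) = G.dist v (r i) + G.dist (r i) (r j)}

lemma root_mem_branchAt {V : Type*} (G : SimpleGraph V) (r : ℕ → V) (i : ℕ) :
    r i ∈ BranchAt G r i := by
  intro j
  simp [SimpleGraph.dist_self]

/-- The branches at `r i` and `r j`, rooted at `r i` and `r j`, are isomorphic. -/
def RootedIso {V : Type*} (G : SimpleGraph V) (r : ℕ → V) (i j : ℕ) : Prop :=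
  ∃ e : (G.induce (BranchAt G r i)) ≃g (G.induce (BranchAt G r j)),
    (e ⟨r i, root_mem_branchAt G r i⟩ : V) = r j

namespace Stmt13Aux
open SimpleGraph

variable {V : Type*} {G : SimpleGraph V}

lemma path_length_eq (hc : G.Connected) (ha : G.IsAcyclic) {u v : V} {p : G.Walk u v}
    (hp : p.IsPath) : p.length = G.dist u v := by
  obtain ⟨q, hq, hql⟩ := hc.exists_path_of_dist u v
  have h := ha.path_unique ⟨p, hp⟩ ⟨q, hq⟩
  have : p = q := congrArg Subtype.val h
  rw [this]; exact hql

lemma dist_split (hc : G.Connected) (ha : G.IsAcyclic) {u v x : V} {p : G.Walk u v}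
    (hp : p.IsPath) (hx : x ∈ p.support) :
    G.dist u v = G.dist u x + G.dist x v := by
  classical
  have h1 : (p.takeUntil x hx).length = G.dist u x := path_length_eq hc ha (hp.takeUntil hx)
  have h2 : (p.dropUntil x hx).length = G.dist x v := path_length_eq hc ha (hp.dropUntil hx)
  have h3 := congrArg Walk.length (p.take_spec hx)
  rw [Walk.length_append, h1, h2, path_length_eq hc ha hp] at h3
  exact h3.symm

lemma mem_path_of_dist (hc : G.Connected) (ha : G.IsAcyclic) {u v x : V}
    (hd : G.dist u v = G.dist u x + G.dist x v)
    {p : G.Walk u v} (hp : p.IsPath) : x ∈ p.support := by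
  obtain ⟨q1, hq1, hl1⟩ := hc.exists_path_of_dist u x
  obtain ⟨q2, hq2, hl2⟩ := hc.exists_path_of_dist x v
  have hlen : (q1.append q2).length = G.dist u v := by
    rw [Walk.length_append, hl1, hl2, hd]
  have hP : (q1.append q2).IsPath := (q1.append q2).isPath_of_length_eq_dist hlen
  have h := ha.path_unique ⟨q1.append q2, hP⟩ ⟨p, hp⟩
  have hw : q1.append q2 = p := congrArg Subtype.val h
  rw [← hw, Walk.mem_support_append_iff]
  exact Or.inl q1.end_mem_support

lemma adj_dist_cases (hc : G.Connected) (ha : G.IsAcyclic) {v x y : V} (hxy : G.Adj x y) :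
    G.dist v y = G.dist v x + 1 ∨ G.dist v x = G.dist v y + 1 := by
  obtain ⟨q, hq, hl⟩ := hc.exists_path_of_dist v y
  by_cases hx : x ∈ q.support
  · left
    have h := dist_split hc ha hq hx
    rw [dist_eq_one_iff_adj.mpr hxy] at h
    exact h
  · right
    have hrp : q.reverse.IsPath := hq.reverse
    have hx' : x ∉ q.reverse.support := by
      rwa [Walk.support_reverse, List.mem_reverse]
    have hP : (Walk.cons hxy q.reverse).IsPath := hrp.cons (h := hxy) hx'
    have hP' := hP.reverse
    have h := path_length_eq hc ha hP'
    rw [Walk.length_reverse, Walk.length_cons, Walk.length_reverse, hl] at h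
    exact h.symm

lemma adj_eq_of_cross (hc : G.Connected) (ha : G.IsAcyclic) {c c' a b : V} (hab : G.Adj a b)
    (hPa : G.dist a c' = G.dist a c + G.dist c c')
    (hPb : G.dist b c' ≠ G.dist b c + G.dist c c') : a = c := by
  classical
  obtain ⟨q, hq, hl⟩ := hc.exists_path_of_dist b c'
  by_cases hmem : a ∈ q.support
  · exfalso
    have hcmem : c ∈ (q.dropUntil a hmem).support :=
      mem_path_of_dist hc ha hPa (hq.dropUntil hmem)
    have hc2 : c ∈ q.support := Walk.support_dropUntil_subset _ _ hcmem
    exact hPb (dist_split hc ha hq hc2)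
  · have hP : (Walk.cons hab q).IsPath := hq.cons (h := hab) hmem
    have hmem2 : c ∈ (Walk.cons hab q).support := mem_path_of_dist hc ha hPa hP
    rw [Walk.support_cons] at hmem2
    rcases List.mem_cons.mp hmem2 with h | h
    · exact h.symm
    · exact absurd (dist_split hc ha hq h) hPb

lemma cross_mem_support (hc : G.Connected) (ha : G.IsAcyclic) {c c' : V} :
    ∀ {a b : V} (W : G.Walk a b),
      G.dist a c' = G.dist a c + G.dist c c' →
      G.dist b c' ≠ G.dist b c + G.dist c c' → c ∈ W.support := by
  intro a b W
  induction W with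
  | nil => intro h1 h2; exact absurd h1 h2
  | @cons u m b hadj w ih =>
    intro h1 h2
    rw [Walk.support_cons]
    by_cases hm : G.dist m c' = G.dist m c + G.dist c c'
    · exact List.mem_cons_of_mem _ (ih hm h2)
    · rw [← adj_eq_of_cross hc ha hadj h1 hm]
      exact List.mem_cons_self

def rayWalk (r : ℕ → V) (hr2 : ∀ n, G.Adj (r n) (r (n + 1))) :
    (i n : ℕ) → G.Walk (r i) (r (i + n))
  | _, 0 => Walk.nil
  | i, n + 1 => (rayWalk r hr2 i n).concat (hr2 (i + n))

lemma rayWalk_length (r : ℕ → V) (hr2 : ∀ n, G.Adj (r n) (r (n + 1))) (i n : ℕ) :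
    (rayWalk r hr2 i n).length = n := by
  induction n with
  | zero => rfl
  | succ n ih => rw [rayWalk, Walk.length_concat, ih]

lemma rayWalk_support (r : ℕ → V) (hr2 : ∀ n, G.Adj (r n) (r (n + 1))) (i n : ℕ) :
    (rayWalk r hr2 i n).support = (List.range (n + 1)).map (fun t => r (i + t)) := by
  induction n with
  | zero => simp [rayWalk, List.range_succ]
  | succ n ih =>
    rw [rayWalk, Walk.support_concat, ih]
    simp [List.concat_eq_append, List.range_succ]

lemma rayWalk_isPath (hinj : Function.Injective r) (hr2 : ∀ n, G.Adj (r n) (r (n + 1)))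
    (i n : ℕ) : (rayWalk (G := G) r hr2 i n).IsPath := by
  rw [Walk.isPath_def, rayWalk_support]
  refine List.Nodup.map ?_ List.nodup_range
  intro a b hab
  have := hinj hab
  omega

lemma ray_dist (hc : G.Connected) (ha : G.IsAcyclic) {r : ℕ → V}
    (hinj : Function.Injective r) (hr2 : ∀ n, G.Adj (r n) (r (n + 1))) (i n : ℕ) :
    G.dist (r i) (r (i + n)) = n := by
  have h := path_length_eq hc ha (rayWalk_isPath hinj hr2 i n)
  rw [rayWalk_length] at h
  exact h.symm

lemma ray_dist_le (hc : G.Connected) (ha : G.IsAcyclic) {r : ℕ → V}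
    (hinj : Function.Injective r) (hr2 : ∀ n, G.Adj (r n) (r (n + 1))) {i j : ℕ}
    (h : i ≤ j) : G.dist (r i) (r j) = j - i := by
  obtain ⟨n, rfl⟩ := Nat.exists_eq_add_of_le h
  rw [ray_dist hc ha hinj hr2]
  omega


lemma ray_dist_shift (hc : G.Connected) (ha : G.IsAcyclic) {r : ℕ → V}
    (hinj : Function.Injective r) (hr2 : ∀ n, G.Adj (r n) (r (n + 1))) (a b c : ℕ) :
    G.dist (r (a + c)) (r (b + c)) = G.dist (r a) (r b) := by
  rcases le_total a b with h | h
  · rw [ray_dist_le hc ha hinj hr2 h, ray_dist_le hc ha hinj hr2 (by omega : a + c ≤ b + c)]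
    omega
  · rw [SimpleGraph.dist_comm, SimpleGraph.dist_comm (u := r a),
      ray_dist_le hc ha hinj hr2 h, ray_dist_le hc ha hinj hr2 (by omega : b + c ≤ a + c)]
    omega

lemma branch_eq (hc : G.Connected) {r : ℕ → V} (hinj : Function.Injective r)
    {i j : ℕ} {v : V} (hi : v ∈ BranchAt G r i) (hj : v ∈ BranchAt G r j) : i = j := by
  have h1 := hi j
  have h2 := hj i
  have hcomm : G.dist (r j) (r i) = G.dist (r i) (r j) := SimpleGraph.dist_comm
  have h0 : G.dist (r i) (r j) = 0 := by omega
  exact hinj (hc.dist_eq_zero_iff.mp h0)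

lemma exists_branch (hc : G.Connected) (ha : G.IsAcyclic) {r : ℕ → V}
    (hr : IsRay G r) (v : V) : ∃ l, v ∈ BranchAt G r l := by
  classical
  obtain ⟨hinj, hr2⟩ := hr
  set d0 := G.dist v (r 0) with hd0
  set l := Nat.findGreatest (fun m => G.dist v (r 0) = G.dist v (r m) + m) d0 with hldef
  have hP0 : (fun m => G.dist v (r 0) = G.dist v (r m) + m) 0 := by simp
  have hPl : G.dist v (r 0) = G.dist v (r l) + l :=
    Nat.findGreatest_spec (P := fun m => G.dist v (r 0) = G.dist v (r m) + m)
      (Nat.zero_le d0) hP0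
  have hmax : ∀ m, l < m → ¬ (G.dist v (r 0) = G.dist v (r m) + m) := by
    intro m h1 hPm
    have hm0 : m ≤ d0 := by omega
    exact Nat.findGreatest_is_greatest h1 hm0 hPm
  have claimA : ∀ j, j ≤ l → G.dist v (r j) = G.dist v (r l) + (l - j) := by
    intro j hj
    have hdlj : G.dist (r l) (r j) = l - j := by
      rw [SimpleGraph.dist_comm]; exact ray_dist_le hc ha hinj hr2 hj
    have hub : G.dist v (r j) ≤ G.dist v (r l) + G.dist (r l) (r j) :=
      hc.dist_triangle
    have h2 : G.dist (r j) (r 0) = j := by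
      rw [SimpleGraph.dist_comm]; exact ray_dist_le hc ha hinj hr2 (Nat.zero_le j)
    have hlb : G.dist v (r 0) ≤ G.dist v (r j) + G.dist (r j) (r 0) :=
      hc.dist_triangle
    omega
  have claimB : ∀ n, G.dist v (r (l + n)) = G.dist v (r l) + n := by
    intro n
    induction n with
    | zero => simp
    | succ n ih =>
      rcases adj_dist_cases hc ha (v := v) (hr2 (l + n)) with h | h
      · show G.dist v (r (l + n + 1)) = G.dist v (r l) + (n + 1)
        omega
      · exfalso
        obtain ⟨q1, hq1, hl1⟩ := hc.exists_path_of_dist v (r l)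
        have hWlen : (q1.append (rayWalk r hr2 l n)).length = G.dist v (r (l + n)) := by
          rw [Walk.length_append, hl1, rayWalk_length, ih]
        have hWpath : (q1.append (rayWalk r hr2 l n)).IsPath :=
          Walk.isPath_of_length_eq_dist _ hWlen
        have hsplit : G.dist v (r (l + n)) =
            G.dist v (r (l + n + 1)) + G.dist (r (l + n + 1)) (r (l + n)) := by
          have hd1 : G.dist (r (l + n + 1)) (r (l + n)) = 1 := by
            rw [SimpleGraph.dist_comm]
            exact dist_eq_one_iff_adj.mpr (hr2 (l + n))
          rw [hd1]; exact h
        have hmem : r (l + n + 1) ∈ (q1.append (rayWalk r hr2 l n)).support :=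
          mem_path_of_dist hc ha hsplit hWpath
        rw [Walk.mem_support_append_iff] at hmem
        rcases hmem with hmem | hmem
        · have hsp : G.dist v (r l) =
              G.dist v (r (l + n + 1)) + G.dist (r (l + n + 1)) (r l) :=
            dist_split hc ha hq1 hmem
          have hdl : G.dist (r (l + n + 1)) (r l) = n + 1 := by
            rw [SimpleGraph.dist_comm]
            have h5 := ray_dist hc ha hinj hr2 l (n + 1)
            rw [show l + (n + 1) = l + n + 1 by omega] at h5
            exact h5
          have hn0 : n = 0 := by omega
          subst hn0
          have hmem' : r (l + 1) ∈ q1.support := hmem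
          have hsp' : G.dist v (r l) =
              G.dist v (r (l + 1)) + G.dist (r (l + 1)) (r l) := hsp
          have hdl' : G.dist (r (l + 1)) (r l) = 0 + 1 := hdl
          have hQlen : (q1.append
              ((rayWalk r hr2 0 l).reverse.copy (congrArg r (Nat.zero_add l)) rfl)).length
              = G.dist v (r 0) := by
            rw [Walk.length_append, hl1, Walk.length_copy, Walk.length_reverse,
              rayWalk_length]
            omega
          have hQpath := Walk.isPath_of_length_eq_dist _ hQlen
          have hmemQ : r (l + 1) ∈ (q1.append
              ((rayWalk r hr2 0 l).reverse.copy (congrArg r (Nat.zero_add l)) rfl)).support :=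
            Walk.mem_support_append_iff _ _ |>.mpr (Or.inl hmem')
          have hsp2 : G.dist v (r 0) =
              G.dist v (r (l + 1)) + G.dist (r (l + 1)) (r 0) :=
            dist_split hc ha hQpath hmemQ
          have hd10 : G.dist (r (l + 1)) (r 0) = l + 1 := by
            rw [SimpleGraph.dist_comm]
            have h6 := ray_dist_le hc ha hinj hr2 (Nat.zero_le (l + 1))
            omega
          exact hmax (l + 1) (by omega) (by omega)
        · rw [rayWalk_support] at hmem
          simp only [List.mem_map, List.mem_range] at hmem
          obtain ⟨t, ht, hteq⟩ := hmem
          have := hinj hteq.symm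
          omega
  refine ⟨l, fun j => ?_⟩
  rcases le_or_gt j l with hj | hj
  · have hd : G.dist (r l) (r j) = l - j := by
      rw [SimpleGraph.dist_comm]; exact ray_dist_le hc ha hinj hr2 hj
    rw [claimA j hj, hd]
  · have hd : G.dist (r l) (r j) = j - l := ray_dist_le hc ha hinj hr2 hj.le
    have hB := claimB (j - l)
    rw [show l + (j - l) = j by omega] at hB
    rw [hB, hd]

lemma hom_dist (hc : G.Connected) (ha : G.IsAcyclic) {f : G →g G}
    (hf : Function.Injective f) (u v : V) : G.dist (f u) (f v) = G.dist u v := by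
  obtain ⟨q, hq, hl⟩ := hc.exists_path_of_dist u v
  have h2 : (q.map f).IsPath := Walk.map_isPath_of_injective hf hq
  have h := path_length_eq hc ha h2
  rw [Walk.length_map, hl] at h
  exact h.symm

section WithF

variable (hc : G.Connected) (ha : G.IsAcyclic) {r : ℕ → V} (hr : IsRay G r)
  {f : G →g G} (hf : Function.Injective f) {p : ℕ} (hp : 1 ≤ p)
  (hshift : ∀ i, f (r i) = r (i + p))

include hc ha hr hf hshift in
lemma fbase (v : V) (j : ℕ) : G.dist (f v) (r (j + p)) = G.dist v (r j) := by
  rw [← hshift j]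
  exact hom_dist hc ha hf v (r j)

include hc ha hr hf hshift in
lemma fge {k : ℕ} {v : V} (hv : v ∈ BranchAt G r k) (j : ℕ) :
    G.dist (f v) (r (j + p)) = G.dist (f v) (r (k + p)) + G.dist (r (k + p)) (r (j + p)) := by
  rw [fbase hc ha hr hf hshift v j, fbase hc ha hr hf hshift v k,
    ray_dist_shift hc ha hr.1 hr.2]
  exact hv j

include hc ha hr hf hp hshift in
lemma fbranch {k : ℕ} (hk : 1 ≤ k) {v : V} (hv : v ∈ BranchAt G r k) :
    f v ∈ BranchAt G r (k + p) := by
  obtain ⟨l, hl⟩ := exists_branch hc ha hr (f v)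
  rcases le_or_gt p l with hlp | hlp
  · obtain ⟨l', rfl⟩ : ∃ l', l = l' + p := ⟨l - p, by omega⟩
    have h1 := fge hc ha hr hf hshift hv l'
    have h2 := hl (k + p)
    have hco : G.dist (r (l' + p)) (r (k + p)) = G.dist (r (k + p)) (r (l' + p)) :=
      SimpleGraph.dist_comm
    have h0 : G.dist (r (k + p)) (r (l' + p)) = 0 := by omega
    have heq : k + p = l' + p := hr.1 (hc.dist_eq_zero_iff.mp h0)
    obtain rfl : k = l' := by omega
    exact hl
  · exfalso
    have h1 := fge hc ha hr hf hshift hv 0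
    rw [Nat.zero_add] at h1
    have h2 := hl p
    have h3 := hl (k + p)
    have d1 : G.dist (r l) (r p) = p - l := ray_dist_le hc ha hr.1 hr.2 hlp.le
    have d2 : G.dist (r l) (r (k + p)) = k + p - l := ray_dist_le hc ha hr.1 hr.2 (by omega)
    have d3 : G.dist (r (k + p)) (r p) = k := by
      rw [SimpleGraph.dist_comm]
      have := ray_dist_le hc ha hr.1 hr.2 (by omega : p ≤ k + p)
      omega
    omega

include hc ha hr hf hp hshift in
lemma fpre {k : ℕ} (hk : 1 ≤ k) {v : V} (hv : f v ∈ BranchAt G r (k + p)) :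
    v ∈ BranchAt G r k := by
  obtain ⟨l, hl⟩ := exists_branch hc ha hr v
  rcases Nat.eq_zero_or_pos l with rfl | hl1
  · exfalso
    have e1 := fbase hc ha hr hf hshift v 0
    rw [Nat.zero_add] at e1
    have e2 := fbase hc ha hr hf hshift v k
    have e3 := hl k
    have e4 := hv p
    have d1 : G.dist (r 0) (r k) = k := by
      have := ray_dist_le hc ha hr.1 hr.2 (Nat.zero_le k)
      omega
    have d2 : G.dist (r (k + p)) (r p) = k := by
      rw [SimpleGraph.dist_comm]
      have := ray_dist_le hc ha hr.1 hr.2 (by omega : p ≤ k + p)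
      omega
    omega
  · have hfb := fbranch hc ha hr hf hp hshift hl1 hl
    have heq : l + p = k + p := branch_eq hc hr.1 hfb hv
    obtain rfl : l = k := by omega
    exact hl

include hc ha hr hf hp hshift in
lemma fiso {k : ℕ} (hk : 1 ≤ k) (hsub : BranchAt G r (k + p) ⊆ Set.range f) :
    RootedIso G r k (k + p) := by
  have hadj : ∀ u v : V, G.Adj (f u) (f v) ↔ G.Adj u v := by
    intro u v
    constructor
    · intro h
      have h1 : G.dist (f u) (f v) = 1 := SimpleGraph.dist_eq_one_iff_adj.mpr h
      rw [hom_dist hc ha hf] at h1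
      exact SimpleGraph.dist_eq_one_iff_adj.mp h1
    · exact fun h => f.map_adj h
  set g : BranchAt G r k → BranchAt G r (k + p) :=
    fun v => ⟨f v.1, fbranch hc ha hr hf hp hshift hk v.2⟩ with hg
  have hbij : Function.Bijective g := by
    constructor
    · intro a b hab
      apply Subtype.ext
      exact hf (congrArg Subtype.val hab)
    · rintro ⟨w, hw⟩
      obtain ⟨v, rfl⟩ := hsub hw
      exact ⟨⟨v, fpre hc ha hr hf hp hshift hk hw⟩, rfl⟩
  refine ⟨⟨Equiv.ofBijective g hbij, ?_⟩, ?_⟩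
  · intro a b
    show G.Adj (f a.1) (f b.1) ↔ G.Adj a.1 b.1
    exact hadj a.1 b.1
  · show f (r k) = r (k + p)
    exact hshift k

end WithF

lemma branch_separation (hc : G.Connected) (ha : G.IsAcyclic) {r : ℕ → V}
    (hr : IsRay G r) {k k' : ℕ} (hkk' : k < k') {a b : V}
    (hA : a ∈ BranchAt G r k) (hB : b ∈ BranchAt G r k') (W : G.Walk a b) :
    r k ∈ W.support := by
  have hm : G.dist (r k) (r k') ≠ 0 := by
    rw [ray_dist_le hc ha hr.1 hr.2 hkk'.le]
    omega
  refine cross_mem_support hc ha W (hA k') ?_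
  intro hcon
  have h2 := hB k
  have hco : G.dist (r k') (r k) = G.dist (r k) (r k') := SimpleGraph.dist_comm
  omega

lemma rootedIso_refl (G : SimpleGraph V) (r : ℕ → V) (i : ℕ) : RootedIso G r i i :=
  ⟨(SimpleGraph.Iso.refl : G.induce (BranchAt G r i) ≃g G.induce (BranchAt G r i)), rfl⟩

lemma rootedIso_symm {G : SimpleGraph V} {r : ℕ → V} {i j : ℕ}
    (h : RootedIso G r i j) : RootedIso G r j i := by
  obtain ⟨e, he⟩ := h
  refine ⟨e.symm, ?_⟩
  have h1 : e ⟨r i, root_mem_branchAt G r i⟩ = ⟨r j, root_mem_branchAt G r j⟩ :=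
    Subtype.ext he
  rw [← h1, RelIso.symm_apply_apply]

lemma rootedIso_trans {G : SimpleGraph V} {r : ℕ → V} {i j k : ℕ}
    (h1 : RootedIso G r i j) (h2 : RootedIso G r j k) : RootedIso G r i k := by
  obtain ⟨e1, he1⟩ := h1
  obtain ⟨e2, he2⟩ := h2
  refine ⟨e1.trans e2, ?_⟩
  have h3 : e1 ⟨r i, root_mem_branchAt G r i⟩ = ⟨r j, root_mem_branchAt G r j⟩ :=
    Subtype.ext he1
  show (e2 (e1 _) : V) = r k
  rw [h3]
  exact he2

end Stmt13Aux

open Stmt13Aux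

/-- If a self-embedding `f` of a locally finite tree translates a ray `r` forward by
`p ≥ 1` and the rooted branches along `r` fall into infinitely many isomorphism
classes, then there are infinitely many positions `s_k <_f t_k = f(s_k)` on the ray
whose branches are non-isomorphic, and `T ∖ f(T)` has infinitely many components. -/
theorem stmt_13 {V : Type*} (G : SimpleGraph V)
    (hG : G.IsTree) (hlf : ∀ v, (G.neighborSet v).Finite)
    (r : ℕ → V) (hr : IsRay G r)
    (f : G →g G) (hf : Function.Injective f)
    (p : ℕ) (hp : 1 ≤ p) (hshift : ∀ i, f (r i) = r (i + p))
    (hnonreg : ¬ ∃ s : Finset ℕ, ∀ i, ∃ j ∈ s, RootedIso G r i j) :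
    (∃ idx : ℕ → ℕ, StrictMono idx ∧ ∀ k, ¬ RootedIso G r (idx k) (idx k + p)) ∧
    Infinite ((G.induce ((Set.range ⇑f)ᶜ : Set V)).ConnectedComponent) := by
  classical
  have hc : G.Connected := hG.isConnected
  have ha : G.IsAcyclic := hG.IsAcyclic
  have hSinf : {i : ℕ | ¬ RootedIso G r i (i + p)}.Infinite := by
    by_contra hfin
    rw [Set.not_infinite] at hfin
    obtain ⟨N, hN⟩ := hfin.bddAbove
    apply hnonreg
    refine ⟨Finset.range (N + p + 1), ?_⟩
    have key : ∀ i, ∃ j, j ≤ N + p ∧ RootedIso G r i j := by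
      intro i
      induction i using Nat.strong_induction_on with
      | _ i ih =>
        by_cases hi : i ≤ N + p
        · exact ⟨i, hi, rootedIso_refl G r i⟩
        · push_neg at hi
          obtain ⟨j, hj, hR⟩ := ih (i - p) (by omega)
          have h1 : RootedIso G r (i - p) (i - p + p) := by
            by_contra hcon
            have : i - p ≤ N := hN hcon
            omega
          rw [show i - p + p = i by omega] at h1
          exact ⟨j, hj, rootedIso_trans (rootedIso_symm h1) hR⟩
    intro i
    obtain ⟨j, hj, hR⟩ := key i
    exact ⟨j, Finset.mem_range.mpr (by omega), hR⟩
  constructor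
  · exact ⟨Nat.nth (fun i => ¬ RootedIso G r i (i + p)), Nat.nth_strictMono hSinf,
      fun k => Nat.nth_mem_of_infinite hSinf k⟩
  · by_contra hinf
    rw [not_infinite_iff_finite] at hinf
    set s : Set V := (Set.range ⇑f)ᶜ with hs
    set K : Set ℕ := {k | p ≤ k ∧ ¬ BranchAt G r k ⊆ Set.range ⇑f} with hK
    have hch : ∀ k : K, ∃ v, v ∈ BranchAt G r k.1 ∧ v ∉ Set.range ⇑f := by
      intro k
      have h2 := k.2.2
      rw [Set.not_subset] at h2
      obtain ⟨v, hv1, hv2⟩ := h2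
      exact ⟨v, hv1, hv2⟩
    choose w hw1 hw2 using hch
    have haux : ∀ k k' : K, k.1 < k'.1 →
        (G.induce s).connectedComponentMk ⟨w k, hw2 k⟩ ≠
        (G.induce s).connectedComponentMk ⟨w k', hw2 k'⟩ := by
      intro k k' hlt heq
      have hreach := SimpleGraph.ConnectedComponent.eq.mp heq
      obtain ⟨W⟩ := hreach
      have hmem : r k.1 ∈ (W.map (SimpleGraph.Embedding.induce s).toHom).support :=
        branch_separation hc ha hr hlt (hw1 k) (hw1 k')
          (W.map (SimpleGraph.Embedding.induce s).toHom)
      rw [SimpleGraph.Walk.support_map] at hmem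
      obtain ⟨u, hu, hval⟩ := List.mem_map.mp hmem
      have hcompl : r k.1 ∈ s := hval ▸ u.2
      have hrange : r k.1 ∈ Set.range ⇑f := by
        have hk := k.2.1
        refine ⟨r (k.1 - p), ?_⟩
        rw [hshift (k.1 - p), show k.1 - p + p = k.1 by omega]
      exact hcompl hrange
    have hKfin : K.Finite := by
      have hinj : Function.Injective
          (fun k : K => (G.induce s).connectedComponentMk ⟨w k, hw2 k⟩) := by
        intro k k' h
        rcases lt_trichotomy k.1 k'.1 with h1 | h1 | h1
        · exact absurd h (haux k k' h1)
        · exact Subtype.ext h1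
        · exact absurd h.symm (haux k' k h1)
      have hfinK := Finite.of_injective _ hinj
      exact Set.toFinite K
    obtain ⟨N, hN⟩ := hKfin.bddAbove
    obtain ⟨k, hk, hNk⟩ := hSinf.exists_gt N
    have hk1 : 1 ≤ k := by omega
    have hsub : BranchAt G r (k + p) ⊆ Set.range ⇑f := by
      by_contra hcon
      have hmemK : k + p ∈ K := ⟨by omega, hcon⟩
      have := hN hmemK
      omega
    exact hk (fiso hc ha hr hf hp hshift hk1 hsub)
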